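/- arXiv:1704.02277 — 2 statements merged into one kernel-verified Lean document; each statement's English description precedes it below -/
import Mathlib

section
/- Let N ≥ 1 and let X : {0,1,2,3}^N → ℝ be a tensor invariant under every permutation of its N indices. Then the following are equivalent: (i) there exist an integer r, weights w₁, …, w_r ≥ 0, and vectors n^{(j)} = (n^{(j)}₀, n^{(j)}₁, n^{(j)}₂, n^{(j)}₃) ∈ ℝ⁴ with n^{(j)}₀ = 1 and (n^{(j)}₁)² + (n^{(j)}₂)² + (n^{(j)}₃)² = 1 such that X_{μ₁…μ_N} = Σ_{j=1}^r w_j n^{(j)}_{μ₁} ⋯ n^{(j)}_{μ_N} for all indices μ₁, …, μ_N ∈ {0,1,2,3}; (ii) there exists a finite positive Borel measure μ supported on the unit sphere S² = {x ∈ ℝ³ : x₁²+x₂²+x₃² = 1} such that X_{μ₁…μ_N} = ∫ x_{μ₁} x_{μ₂} ⋯ x_{μ_N} dμ(x) for all indices, where by convention x₀ := 1. -/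
open MeasureTheory

noncomputable section

/-- The extension of `x ∈ ℝ³` to `ℝ⁴` by the convention `x₀ := 1`. -/
def ext1 (x : Fin 3 → ℝ) : Fin 4 → ℝ := ![1, x 0, x 1, x 2]

/-- The (topological) support of a measure. -/
def measureSupport (μ : Measure (Fin 3 → ℝ)) : Set (Fin 3 → ℝ) :=
  {x | ∀ U : Set (Fin 3 → ℝ), IsOpen U → x ∈ U → μ U ≠ 0}

/-- The complement of the support of a measure on `ℝ³` is null. -/
lemma aux_measure_compl_support (μ : Measure (Fin 3 → ℝ)) :
    μ (measureSupport μ)ᶜ = 0 := by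
  have h : ∀ x : ((measureSupport μ)ᶜ : Set (Fin 3 → ℝ)),
      ∃ U : Set (Fin 3 → ℝ), IsOpen U ∧ (x : Fin 3 → ℝ) ∈ U ∧ μ U = 0 := by
    rintro ⟨x, hx⟩
    simp only [Set.mem_compl_iff, measureSupport, Set.mem_setOf_eq] at hx
    push_neg at hx
    exact hx
  choose U hUopen hmem h0 using h
  have hcover : (measureSupport μ)ᶜ ⊆ ⋃ x, U x := fun x hx =>
    Set.mem_iUnion.2 ⟨⟨x, hx⟩, hmem ⟨x, hx⟩⟩
  obtain ⟨T, hTc, hTU⟩ := TopologicalSpace.isOpen_iUnion_countable U hUopen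
  have : μ (⋃ x, U x) = 0 := by
    rw [← hTU]
    exact (measure_biUnion_null_iff hTc).2 fun x _ => h0 x
  exact measure_mono_null hcover this

/-- Summing a function extended by zero from `Fin m` to `Fin n`. -/
lemma aux_sum_extend {M : Type*} [AddCommMonoid M] {m n : ℕ} (hmn : m ≤ n) (g : Fin m → M) :
    (∑ i : Fin n, if h : (i : ℕ) < m then g ⟨i, h⟩ else 0) = ∑ j : Fin m, g j := by
  rw [Fin.sum_univ_eq_sum_range (fun k => if h : k < m then g ⟨k, h⟩ else 0) n]
  rw [← Finset.sum_subset (Finset.range_subset_range.mpr hmn)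
    (fun k _ hk => dif_neg (by simpa using hk))]
  rw [← Fin.sum_univ_eq_sum_range (fun k => if h : k < m then g ⟨k, h⟩ else 0) m]
  exact Finset.sum_congr rfl fun j _ => by simp [j.is_lt]

/-- Carathéodory: in a finite-dimensional space, the convex hull of a set is the image of
the standard simplex parametrization. -/
lemma aux_convexHull_eq_image {E : Type*} [NormedAddCommGroup E] [NormedSpace ℝ E]
    [FiniteDimensional ℝ E] (K : Set E) (z₀ : E) (hz₀ : z₀ ∈ K) :
    convexHull ℝ K =
      (fun p : (Fin (Module.finrank ℝ E + 1) → ℝ) × (Fin (Module.finrank ℝ E + 1) → E) =>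
          ∑ i, p.1 i • p.2 i) ''
        ((stdSimplex ℝ (Fin (Module.finrank ℝ E + 1))) ×ˢ Set.univ.pi fun _ => K) := by
  set n := Module.finrank ℝ E + 1 with hn
  apply Set.Subset.antisymm
  · intro x hx
    obtain ⟨ι, hfin, z, w, hzK, hai, hwpos, hw1, hsum⟩ :=
      eq_pos_convex_span_of_mem_convexHull hx
    have hcard : Fintype.card ι ≤ n := by
      have h1 := hai.card_le_finrank_succ
      have h2 := Submodule.finrank_le (vectorSpan ℝ (Set.range z))
      omega
    set m := Fintype.card ι with hm
    set e := Fintype.equivFin ι with he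
    refine ⟨(fun i => if h : (i : ℕ) < m then w (e.symm ⟨i, h⟩) else 0,
             fun i => if h : (i : ℕ) < m then z (e.symm ⟨i, h⟩) else z₀),
            ⟨⟨fun i => ?_, ?_⟩, fun i _ => ?_⟩, ?_⟩
    · by_cases h : (i : ℕ) < m
      · simpa [h] using (hwpos (e.symm ⟨i, h⟩)).le
      · simp [h]
    · have := aux_sum_extend hcard (fun j => w (e.symm j))
      simpa [this] using (Equiv.sum_comp e.symm w).trans hw1
    · by_cases h : (i : ℕ) < m
      · simpa [h] using hzK (Set.mem_range_self (e.symm ⟨i, h⟩))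
      · simpa [h] using hz₀
    · have h1 : (∑ i : Fin n, (if h : (i : ℕ) < m then w (e.symm ⟨i, h⟩) else 0) •
          (if h : (i : ℕ) < m then z (e.symm ⟨i, h⟩) else z₀)) =
          ∑ i : Fin n, if h : (i : ℕ) < m then w (e.symm ⟨i, h⟩) • z (e.symm ⟨i, h⟩) else 0 := by
        refine Finset.sum_congr rfl fun i _ => ?_
        by_cases h : (i : ℕ) < m <;> simp [h]
      have h2 := aux_sum_extend hcard (fun j => w (e.symm j) • z (e.symm j))
      have h3 := Equiv.sum_comp e.symm (fun i => w i • z i)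
      simp only [h1, h2, h3]
      exact h3.trans hsum
  · rintro x ⟨⟨w, z⟩, ⟨⟨hw0, hw1⟩, hzK⟩, rfl⟩
    exact (convex_convexHull ℝ K).sum_mem (fun i _ => hw0 i) hw1
      (fun i _ => subset_convexHull ℝ K (hzK i (Set.mem_univ i)))

lemma aux_ext1_cont (k : Fin 4) : Continuous fun x : Fin 3 → ℝ => ext1 x k := by
  fin_cases k <;> simp [ext1] <;> fun_prop

/-- for a permutation-invariant tensor `X : {0,1,2,3}^N → ℝ`, the
following are equivalent: (i) `X` is a nonnegative combination of symmetric products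
`n^{(j)}_{μ₁} ⋯ n^{(j)}_{μ_N}` with `n^{(j)}₀ = 1` and unit Bloch vectors; (ii) there
is a finite positive Borel measure `μ` supported on the unit sphere `S² ⊂ ℝ³` with
`X_{μ₁…μ_N} = ∫ x_{μ₁} ⋯ x_{μ_N} dμ(x)` (with the convention `x₀ := 1`). -/
theorem separable_iff_representing_measure_on_sphere (N : ℕ) (hN : 1 ≤ N)
    (X : (Fin N → Fin 4) → ℝ)
    (hsym : ∀ (π : Equiv.Perm (Fin N)) (μs : Fin N → Fin 4), X (μs ∘ π) = X μs) :
    (∃ (r : ℕ) (w : Fin r → ℝ) (nv : Fin r → Fin 4 → ℝ),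
        (∀ j, 0 ≤ w j) ∧ (∀ j, nv j 0 = 1) ∧
        (∀ j, (nv j 1) ^ 2 + (nv j 2) ^ 2 + (nv j 3) ^ 2 = 1) ∧
        ∀ μs : Fin N → Fin 4, X μs = ∑ j, w j * ∏ i, nv j (μs i))
    ↔ (∃ μ : Measure (Fin 3 → ℝ), IsFiniteMeasure μ ∧
        measureSupport μ ⊆ {x | x 0 ^ 2 + x 1 ^ 2 + x 2 ^ 2 = 1} ∧
        ∀ μs : Fin N → Fin 4, X μs = ∫ x, ∏ i, ext1 x (μs i) ∂μ) := by
  constructor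
  · rintro ⟨r, w, nv, hw, h0, hunit, hX⟩
    set p : Fin r → (Fin 3 → ℝ) := fun j => ![nv j 1, nv j 2, nv j 3] with hp
    have hext : ∀ j, ext1 (p j) = nv j := by
      intro j
      funext k
      fin_cases k <;> simp [ext1, hp, h0 j]
    have hpS : ∀ j, p j ∈ {x : Fin 3 → ℝ | x 0 ^ 2 + x 1 ^ 2 + x 2 ^ 2 = 1} := by
      intro j
      simpa [hp] using hunit j
    refine ⟨∑ j, ENNReal.ofReal (w j) • Measure.dirac (p j), ?_, ?_, ?_⟩
    · constructor
      simp only [Measure.finset_sum_apply, Measure.smul_apply, smul_eq_mul, measure_univ,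
        mul_one]
      exact ENNReal.sum_lt_top.mpr fun j _ => ENNReal.ofReal_lt_top
    · intro x hx
      by_contra hxS
      have hScl : IsClosed {x : Fin 3 → ℝ | x 0 ^ 2 + x 1 ^ 2 + x 2 ^ 2 = 1} :=
        isClosed_eq (by fun_prop) continuous_const
      refine hx _ hScl.isOpen_compl hxS ?_
      simp only [Measure.finset_sum_apply, Measure.smul_apply, smul_eq_mul]
      refine Finset.sum_eq_zero fun j _ => ?_
      rw [Measure.dirac_apply' _ hScl.isOpen_compl.measurableSet]
      simp [Set.indicator_of_notMem, hpS j]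
    · intro μs
      have hcont : Continuous fun x : Fin 3 → ℝ => ∏ i, ext1 x (μs i) :=
        continuous_finset_prod _ fun i _ => aux_ext1_cont (μs i)
      have hintd : ∀ j, Integrable (fun x : Fin 3 → ℝ => ∏ i, ext1 x (μs i))
          (Measure.dirac (p j)) := by
        intro j
        refine ⟨hcont.aestronglyMeasurable, ?_⟩
        simp only [HasFiniteIntegral, lintegral_dirac]
        exact ENNReal.coe_lt_top
      rw [integral_finset_sum_measure fun j _ => (hintd j).smul_measure ENNReal.ofReal_ne_top]
      rw [hX μs]
      refine Finset.sum_congr rfl fun j _ => ?_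
      rw [integral_smul_measure, integral_dirac, ENNReal.toReal_ofReal (hw j), smul_eq_mul,
        hext j]
  · rintro ⟨μ, hfin, hsupp, hX⟩
    by_cases hμ : μ = 0
    · refine ⟨0, Fin.elim0, Fin.elim0, (fun j => j.elim0), (fun j => j.elim0),
        (fun j => j.elim0), fun μs => ?_⟩
      simp [hX μs, hμ]
    · haveI := Fact.mk hμ
      haveI : NeZero μ := ⟨hμ⟩
      set S : Set (Fin 3 → ℝ) := {x | x 0 ^ 2 + x 1 ^ 2 + x 2 ^ 2 = 1} with hS
      have hae : ∀ᵐ x ∂μ, x ∈ S := by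
        have : μ Sᶜ = 0 :=
          measure_mono_null (Set.compl_subset_compl.2 hsupp) (aux_measure_compl_support μ)
        rw [ae_iff]; exact this
      set v : (Fin 3 → ℝ) → ((Fin N → Fin 4) → ℝ) := fun x μs => ∏ i, ext1 x (μs i) with hv
      have hvcont : Continuous v :=
        continuous_pi fun μs => continuous_finset_prod _ fun i _ => aux_ext1_cont (μs i)
      have hsq : ∀ x ∈ S, ∀ i : Fin 3, |x i| ≤ 1 := by
        intro x hx i
        have h0 : x 0 ^ 2 + x 1 ^ 2 + x 2 ^ 2 = 1 := hx
        rw [← sq_le_one_iff_abs_le_one]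
        fin_cases i
        · show x 0 ^ 2 ≤ 1; nlinarith [sq_nonneg (x 1), sq_nonneg (x 2)]
        · show x 1 ^ 2 ≤ 1; nlinarith [sq_nonneg (x 0), sq_nonneg (x 2)]
        · show x 2 ^ 2 ≤ 1; nlinarith [sq_nonneg (x 0), sq_nonneg (x 1)]
      have habs : ∀ x ∈ S, ∀ k : Fin 4, |ext1 x k| ≤ 1 := by
        intro x hx k
        fin_cases k
        · show |ext1 x 0| ≤ 1; simp [ext1]
        · show |ext1 x 1| ≤ 1; simpa [ext1] using hsq x hx 0
        · show |ext1 x 2| ≤ 1; simpa [ext1] using hsq x hx 1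
        · show |ext1 x 3| ≤ 1; simpa [ext1] using hsq x hx 2
      have hbound : ∀ x ∈ S, ‖v x‖ ≤ 1 := by
        intro x hx
        rw [pi_norm_le_iff_of_nonneg zero_le_one]
        intro μs
        rw [Real.norm_eq_abs, hv]
        calc |∏ i, ext1 x (μs i)| = ∏ i, |ext1 x (μs i)| := Finset.abs_prod _ _
          _ ≤ 1 := Finset.prod_le_one (fun i _ => abs_nonneg _)
              (fun i _ => habs x hx (μs i))
      have hint : Integrable v μ :=
        Integrable.mono' (integrable_const 1) hvcont.aestronglyMeasurable
          (hae.mono fun x hx => hbound x hx)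
      -- S is compact
      have hScl : IsClosed S := isClosed_eq (by fun_prop) continuous_const
      have hSb : S ⊆ Metric.closedBall 0 1 := by
        intro x hx
        rw [Metric.mem_closedBall, dist_zero_right, pi_norm_le_iff_of_nonneg zero_le_one]
        intro i
        rw [Real.norm_eq_abs]
        exact hsq x hx i
      have hScomp : IsCompact S :=
        Metric.isCompact_of_isClosed_isBounded hScl (Metric.isBounded_closedBall.subset hSb)
      set K := v '' S with hK
      have hKcomp : IsCompact K := hScomp.image hvcont
      have hx₀S : (![1, 0, 0] : Fin 3 → ℝ) ∈ S := by simp [hS]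
      have hz₀ : v ![1, 0, 0] ∈ K := ⟨_, hx₀S, rfl⟩
      set n := Module.finrank ℝ ((Fin N → Fin 4) → ℝ) + 1 with hn
      have hKeq := aux_convexHull_eq_image K _ hz₀
      have hclosed : IsClosed (convexHull ℝ K) := by
        rw [hKeq]
        refine IsCompact.isClosed ?_
        refine IsCompact.image ?_ ?_
        · exact IsCompact.prod (isCompact_stdSimplex ℝ _) (isCompact_univ_pi fun _ => hKcomp)
        · fun_prop
      have havg : (⨍ x, v x ∂μ) ∈ convexHull ℝ K :=
        (convex_convexHull ℝ K).average_mem hclosed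
          (hae.mono fun x hx => subset_convexHull ℝ K ⟨x, hx, rfl⟩) hint
      rw [hKeq] at havg
      obtain ⟨⟨w, z⟩, ⟨⟨hw0, hw1⟩, hzK⟩, hgz⟩ := havg
      have hzmem : ∀ i, ∃ x ∈ S, v x = z i := fun i => hzK i (Set.mem_univ i)
      choose y hyS hyv using hzmem
      set M := (μ Set.univ).toReal with hM
      have hMne : M ≠ 0 :=
        ENNReal.toReal_ne_zero.2 ⟨(Measure.measure_univ_ne_zero).2 hμ, measure_ne_top μ _⟩
      have hintM : ∫ x, v x ∂μ = M • ⨍ x, v x ∂μ := by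
        rw [average_eq, smul_smul, measureReal_def, mul_inv_cancel₀ hMne, one_smul]
      refine ⟨n, fun j => M * w j, fun j => ext1 (y j), ?_, ?_, ?_, ?_⟩
      · exact fun j => mul_nonneg ENNReal.toReal_nonneg (hw0 j)
      · intro j; simp [ext1]
      · intro j
        have := hyS j
        simp only [hS, Set.mem_setOf_eq] at this
        simpa [ext1] using this
      · intro μs
        have hcomp : X μs = (∫ x, v x ∂μ) μs := by
          rw [hX μs]
          have h := (ContinuousLinearMap.proj (R := ℝ) (φ := fun _ : (Fin N → Fin 4) => ℝ)
            μs).integral_comp_comm hint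
          simp only [ContinuousLinearMap.proj_apply] at h
          rw [← h, hv]
        rw [hcomp, hintM, ← hgz]
        simp only [Pi.smul_apply, Finset.sum_apply, smul_eq_mul, Finset.mul_sum]
        refine Finset.sum_congr rfl fun j _ => ?_
        rw [← hyv j]
        simp [hv, mul_assoc]
end
end

section
/- Let y = (y_α)_{|α|≤2} be a tms of degree 2 in 3 variables. Then y admits a representing measure supported on the unit sphere S² = {x ∈ ℝ³ : x₁²+x₂²+x₃² = 1} if and only if the 4×4 moment matrix M₁(y), with rows and columns indexed by the multi-indices (0,0,0), (1,0,0), (0,1,0), (0,0,1) and entries M₁(y)_{αβ} = y_{α+β}, is positive semidefinite and y_{000} = y_{200} + y_{020} + y_{002}. -/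
open MeasureTheory Matrix

noncomputable section

/-- The monomial `x^α = ∏ i, x i ^ α i`. -/
def mono (x : Fin 3 → ℝ) (α : Fin 3 → ℕ) : ℝ := ∏ i, x i ^ α i

/-- Multi-indices `α ∈ ℕ^n` of degree `|α| ≤ k`. -/
abbrev MIdx (n k : ℕ) := {α : Fin n → Fin (k + 1) // (∑ i, (α i).1) ≤ k}

/-- The multi-index as an element of `ℕ^n`. -/
def MIdx.toNat {n k : ℕ} (α : MIdx n k) : Fin n → ℕ := fun i => (α.1 i).1

/-- The moment matrix of order `k`: `M_k(y)_{αβ} = y_{α+β}` for `|α|,|β| ≤ k`. -/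
def momentMatrix (n k : ℕ) (y : (Fin n → ℕ) → ℝ) :
    Matrix (MIdx n k) (MIdx n k) ℝ :=
  Matrix.of fun α β => y (α.toNat + β.toNat)

/-! ### Auxiliary material -/

def eIdx (i : Fin 3) : Fin 3 → ℕ := fun j => if i = j then 1 else 0

lemma mono_add (x : Fin 3 → ℝ) (a b : Fin 3 → ℕ) :
    mono x (a + b) = mono x a * mono x b := by
  simp [mono, pow_add, Finset.prod_mul_distrib]

lemma mono_zero (x : Fin 3 → ℝ) : mono x 0 = 1 := by simp [mono]

lemma mono_e (x : Fin 3 → ℝ) (i : Fin 3) : mono x (eIdx i) = x i := by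
  fin_cases i <;> simp [mono, eIdx, Fin.prod_univ_three]

lemma continuous_mono (γ : Fin 3 → ℕ) : Continuous fun x : Fin 3 → ℝ => mono x γ :=
  continuous_finset_prod _ fun i _ => (continuous_apply i).pow _

def z1 : MIdx 3 1 := ⟨fun _ => 0, by decide⟩
def ε (i : Fin 3) : MIdx 3 1 := ⟨fun j => if i = j then 1 else 0, by fin_cases i <;> decide⟩

lemma z1_toNat : z1.toNat = 0 := rfl

lemma ε_toNat (i : Fin 3) : (ε i).toNat = eIdx i := by
  funext j; simp [MIdx.toNat, ε, eIdx, apply_ite Fin.val]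

lemma idx_zz : z1.toNat + z1.toNat = (0 : Fin 3 → ℕ) := rfl

lemma idx_ze (i : Fin 3) : z1.toNat + (ε i).toNat = eIdx i := by
  rw [z1_toNat, ε_toNat, zero_add]

lemma idx_ez (i : Fin 3) : (ε i).toNat + z1.toNat = eIdx i := by
  rw [z1_toNat, ε_toNat, add_zero]

lemma idx_ee (i j : Fin 3) : (ε i).toNat + (ε j).toNat = eIdx i + eIdx j := by
  rw [ε_toNat, ε_toNat]

lemma univ_MIdx : (Finset.univ : Finset (MIdx 3 1)) = {z1, ε 0, ε 1, ε 2} := by decide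

lemma sum_MIdx (f : MIdx 3 1 → ℝ) :
    ∑ α, f α = f z1 + f (ε 0) + f (ε 1) + f (ε 2) := by
  rw [univ_MIdx]
  rw [Finset.sum_insert (by decide), Finset.sum_insert (by decide),
    Finset.sum_insert (by decide), Finset.sum_singleton]
  ring

lemma quad_expand (y : (Fin 3 → ℕ) → ℝ) (W : MIdx 3 1 → ℝ) :
    star W ⬝ᵥ (momentMatrix 3 1 y) *ᵥ W
      = ∑ α : MIdx 3 1, ∑ β : MIdx 3 1, W α * W β * y (α.toNat + β.toNat) := by
  simp only [dotProduct, Matrix.mulVec, dotProduct, momentMatrix, Matrix.of_apply,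
    Finset.mul_sum, Pi.star_apply, star_trivial]
  exact Finset.sum_congr rfl fun α _ => Finset.sum_congr rfl fun β _ => by ring

lemma alpha_cases (α : Fin 3 → ℕ) (h : (∑ i, α i) ≤ 2) :
    α = 0 ∨ (∃ i, α = eIdx i) ∨ (∃ i j, α = eIdx i + eIdx j) := by
  obtain ⟨a, ha⟩ : ∃ a, α 0 = a := ⟨_, rfl⟩
  obtain ⟨b, hb⟩ : ∃ b, α 1 = b := ⟨_, rfl⟩
  obtain ⟨c, hc⟩ : ∃ c, α 2 = c := ⟨_, rfl⟩
  have hα : α = ![a, b, c] := by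
    funext i; fin_cases i <;> simp [← ha, ← hb, ← hc]
  subst hα
  simp only [Fin.sum_univ_three, Matrix.cons_val_zero, Matrix.cons_val_one, Matrix.head_cons,
    Matrix.cons_val_two, Matrix.tail_cons] at h
  simp only [Matrix.cons_val_zero, Matrix.cons_val_one, Matrix.head_cons,
    Matrix.cons_val_two, Matrix.tail_cons] at ha hb hc
  have h1 : a ≤ 2 := by omega
  have h2 : b ≤ 2 := by omega
  have h3 : c ≤ 2 := by omega
  clear ha hb hc
  interval_cases a <;> interval_cases b <;> interval_cases c <;>
  first
  | omega
  | (left; decide)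
  | (right; left;
     first
     | (exact ⟨0, by decide⟩)
     | (exact ⟨1, by decide⟩)
     | (exact ⟨2, by decide⟩))
  | (right; right;
     first
     | (exact ⟨0, 0, by decide⟩)
     | (exact ⟨0, 1, by decide⟩)
     | (exact ⟨0, 2, by decide⟩)
     | (exact ⟨1, 1, by decide⟩)
     | (exact ⟨1, 2, by decide⟩)
     | (exact ⟨2, 2, by decide⟩))

lemma measure_compl_null (μ : Measure (Fin 3 → ℝ)) (S : Set (Fin 3 → ℝ))
    (hS : measureSupport μ ⊆ S) : μ Sᶜ = 0 := by
  classical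
  refine le_antisymm ?_ (zero_le)
  set 𝒰 : Set (Set (Fin 3 → ℝ)) := {U | IsOpen U ∧ μ U = 0} with h𝒰
  obtain ⟨T, hTc, hTsub, hTU⟩ := TopologicalSpace.isOpen_sUnion_countable 𝒰
    (fun s hs => hs.1)
  have hV : μ (⋃₀ 𝒰) = 0 := by
    rw [← hTU]
    rw [measure_sUnion_null_iff hTc]
    exact fun s hs => (hTsub hs).2
  have hsub : Sᶜ ⊆ ⋃₀ 𝒰 := by
    intro x hx
    have : x ∉ measureSupport μ := fun hmem => hx (hS hmem)
    simp only [measureSupport, Set.mem_setOf_eq, not_forall] at this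
    obtain ⟨U, hU, hxU, hμU⟩ := this
    exact ⟨U, ⟨hU, by simpa using hμU⟩, hxU⟩
  calc μ Sᶜ ≤ μ (⋃₀ 𝒰) := measure_mono hsub
  _ = 0 := hV

lemma integrable_dirac'' {f : (Fin 3 → ℝ) → ℝ} (hf : Continuous f) (a : Fin 3 → ℝ) :
    Integrable f (Measure.dirac a) := by
  have _ := hf
  refine (integrable_const (f a)).congr ?_
  have : ∀ᵐ x ∂(Measure.dirac a), x = a := by
    rw [MeasureTheory.ae_dirac_eq]; simp
  filter_upwards [this] with x hx
  rw [hx]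

lemma moments_of_atoms {ι : Type} [Fintype ι] (w : ι → ℝ) (u : ι → Fin 3 → ℝ)
    (hw : ∀ k, 0 ≤ w k) :
    ∃ μ : Measure (Fin 3 → ℝ), IsFiniteMeasure μ ∧
      measureSupport μ ⊆ Set.range u ∧
      ∀ g : (Fin 3 → ℝ) → ℝ, Continuous g → ∫ x, g x ∂μ = ∑ k, w k * g (u k) := by
  classical
  refine ⟨∑ k, ENNReal.ofReal (w k) • Measure.dirac (u k), ?_, ?_, ?_⟩
  · constructor
    rw [Measure.finset_sum_apply]
    refine ENNReal.sum_lt_top.2 fun k _ => ?_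
    simp only [Measure.smul_apply, smul_eq_mul]
    exact ENNReal.mul_lt_top ENNReal.ofReal_lt_top (by simp)
  · intro x hx
    by_contra hxr
    refine hx (Set.range u)ᶜ ((Set.finite_range u).isClosed.isOpen_compl) hxr ?_
    rw [Measure.finset_sum_apply]
    refine Finset.sum_eq_zero fun k _ => ?_
    simp only [Measure.smul_apply, smul_eq_mul]
    rw [Measure.dirac_apply' _ (Set.finite_range u).isClosed.isOpen_compl.measurableSet]
    rw [Set.indicator_of_notMem (by simp)]
    simp
  · intro g hg
    rw [integral_finset_sum_measure (fun k _ => (integrable_dirac'' hg (u k)).smul_measure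
      ENNReal.ofReal_lt_top.ne)]
    refine Finset.sum_congr rfl fun k _ => ?_
    rw [integral_smul_measure, integral_dirac, ENNReal.toReal_ofReal (hw k), smul_eq_mul]

lemma dyad (d q : Fin 3 → ℝ) (γ r : ℝ) (hγ : 0 ≤ γ) (hr : 0 < r)
    (hq : q 0^2 + q 1^2 + q 2^2 = 1) (hd : (d 0^2 + d 1^2 + d 2^2) + r = 1) :
    ∃ (w₁ w₂ : ℝ) (u₁ u₂ : Fin 3 → ℝ),
      0 ≤ w₁ ∧ 0 ≤ w₂ ∧
      (u₁ 0^2 + u₁ 1^2 + u₁ 2^2 = 1) ∧ (u₂ 0^2 + u₂ 1^2 + u₂ 2^2 = 1) ∧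
      w₁ + w₂ = γ ∧ (∀ i, w₁ * u₁ i + w₂ * u₂ i = γ * d i) ∧
      (∀ i j, w₁ * u₁ i * u₁ j + w₂ * u₂ i * u₂ j = γ * (d i * d j + r * q i * q j)) := by
  obtain ⟨a, ha⟩ : ∃ a, a = d 0 * q 0 + d 1 * q 1 + d 2 * q 2 := ⟨_, rfl⟩
  obtain ⟨m, hm⟩ : ∃ m, m = Real.sqrt (a^2 + r) := ⟨_, rfl⟩
  have hm2 : m^2 = a^2 + r := by
    rw [hm]; exact Real.sq_sqrt (by positivity)
  have hmpos : 0 < m := by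
    rw [hm]; exact Real.sqrt_pos.2 (by positivity)
  have hsge : 0 ≤ m - a := by nlinarith
  have htge : 0 ≤ m + a := by nlinarith
  refine ⟨γ*(m+a)/(2*m), γ*(m-a)/(2*m), fun i => d i + (m-a)*q i, fun i => d i - (m+a)*q i,
    by positivity, by positivity, ?_, ?_, by field_simp; ring, ?_, ?_⟩
  · show (d 0 + (m-a)*q 0)^2 + (d 1 + (m-a)*q 1)^2 + (d 2 + (m-a)*q 2)^2 = 1
    linear_combination hd + (m-a)^2 * hq + hm2 - (2*(m-a)) * ha
  · show (d 0 - (m+a)*q 0)^2 + (d 1 - (m+a)*q 1)^2 + (d 2 - (m+a)*q 2)^2 = 1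
    linear_combination hd + (m+a)^2 * hq + hm2 + (2*(m+a)) * ha
  · intro i
    show γ*(m+a)/(2*m) * (d i + (m-a)*q i) + γ*(m-a)/(2*m) * (d i - (m+a)*q i) = γ * d i
    field_simp
    ring
  · intro i j
    show γ*(m+a)/(2*m) * (d i + (m-a)*q i) * (d j + (m-a)*q j)
       + γ*(m-a)/(2*m) * (d i - (m+a)*q i) * (d j - (m+a)*q j)
       = γ * (d i * d j + r * q i * q j)
    rw [div_mul_eq_mul_div, div_mul_eq_mul_div, div_mul_eq_mul_div, div_mul_eq_mul_div,
      ← add_div, div_eq_iff (by positivity : (2*m) ≠ 0)]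
    linear_combination (2*m*γ*(q i)*(q j)) * hm2

open scoped MatrixOrder in
lemma psd_decomp (C : Matrix (Fin 3) (Fin 3) ℝ) (hC : C.PosSemidef) :
    ∃ (ρ : Fin 3 → ℝ) (q : Fin 3 → Fin 3 → ℝ),
      (∀ k, 0 ≤ ρ k) ∧ (∀ k, (q k 0)^2 + (q k 1)^2 + (q k 2)^2 = 1) ∧
      (∀ i j, C i j = ∑ k, ρ k * q k i * q k j) := by
  classical
  obtain ⟨B, hBB⟩ : ∃ B, B = CFC.sqrt C := ⟨_, rfl⟩
  have hmul : B * B = C := by rw [hBB]; exact CFC.sqrt_mul_sqrt_self C hC.nonneg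
  have hsym : ∀ i k, B i k = B k i := by
    intro i k
    have h := (CFC.sqrt_nonneg C).posSemidef.1
    rw [← hBB] at h
    conv_lhs => rw [← h]
    simp [Matrix.conjTranspose_apply]
  obtain ⟨ρ, hρ⟩ : ∃ ρ : Fin 3 → ℝ, ρ = fun k => (B k 0)^2 + (B k 1)^2 + (B k 2)^2 := ⟨_, rfl⟩
  have hρnn : ∀ k, 0 ≤ ρ k := by intro k; rw [hρ]; positivity
  obtain ⟨q, hqdef⟩ : ∃ q : Fin 3 → Fin 3 → ℝ,
      q = fun k => if ρ k = 0 then ![1,0,0] else fun i => B k i / Real.sqrt (ρ k) := ⟨_, rfl⟩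
  have hkey : ∀ k i j, ρ k * q k i * q k j = B k i * B k j := by
    intro k i j
    by_cases h : ρ k = 0
    · have h0 : B k 0 ^ 2 + B k 1 ^ 2 + B k 2 ^ 2 = 0 := by
        have h' := h; rw [hρ] at h'; simpa using h'
      have e0 : B k 0 = 0 := by nlinarith [sq_nonneg (B k 0), sq_nonneg (B k 1), sq_nonneg (B k 2)]
      have e1 : B k 1 = 0 := by nlinarith [sq_nonneg (B k 0), sq_nonneg (B k 1), sq_nonneg (B k 2)]
      have e2 : B k 2 = 0 := by nlinarith [sq_nonneg (B k 0), sq_nonneg (B k 1), sq_nonneg (B k 2)]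
      have hzero : ∀ i', B k i' = 0 := by
        intro i'
        fin_cases i'
        · exact e0
        · exact e1
        · exact e2
      rw [h, hzero i, hzero j]; ring
    · have hpos : 0 < ρ k := lt_of_le_of_ne (hρnn k) (Ne.symm h)
      have hs : Real.sqrt (ρ k) ^ 2 = ρ k := Real.sq_sqrt (hρnn k)
      have hsne : Real.sqrt (ρ k) ≠ 0 := by positivity
      rw [hqdef]; simp only [if_neg h]
      field_simp
      rw [hs]; ring
  refine ⟨ρ, q, hρnn, ?_, ?_⟩
  · intro k
    by_cases h : ρ k = 0
    · rw [hqdef]; simp [if_pos h]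
    · have hpos : 0 < ρ k := lt_of_le_of_ne (hρnn k) (Ne.symm h)
      have hs : Real.sqrt (ρ k) ^ 2 = ρ k := Real.sq_sqrt (hρnn k)
      have hsne : Real.sqrt (ρ k) ≠ 0 := by positivity
      rw [hqdef]; simp only [if_neg h]
      field_simp
      rw [hs, hρ]
  · intro i j
    rw [← hmul, Matrix.mul_apply]
    refine Finset.sum_congr rfl fun k _ => ?_
    rw [hkey k i j, hsym i k]

set_option maxHeartbeats 2000000 in
lemma exists_atoms (c : ℝ) (b : Fin 3 → ℝ) (A : Matrix (Fin 3) (Fin 3) ℝ)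
    (hsymm : ∀ i j, A i j = A j i)
    (htr : A 0 0 + A 1 1 + A 2 2 = c)
    (hM : ∀ (t : ℝ) (v : Fin 3 → ℝ),
      0 ≤ c*t^2 + 2*t*(b 0*v 0 + b 1*v 1 + b 2*v 2) + ∑ i, ∑ j, A i j * v i * v j) :
    ∃ (ι : Type) (_ : Fintype ι) (w : ι → ℝ) (u : ι → Fin 3 → ℝ),
      (∀ k, 0 ≤ w k) ∧ (∀ k, (u k 0)^2 + (u k 1)^2 + (u k 2)^2 = 1) ∧
      (∑ k, w k = c) ∧ (∀ i, ∑ k, w k * u k i = b i) ∧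
      (∀ i j, (∑ k, w k * u k i * u k j) = A i j) := by
  classical
  have hc : 0 ≤ c := by
    have := hM 1 ![0,0,0]
    simp [Fin.sum_univ_three] at this
    linarith
  by_cases hc0 : c = 0
  · -- degenerate case : everything vanishes
    subst hc0
    have hd0 : 0 ≤ A 0 0 := by
      have := hM 0 ![1,0,0]; simp [Fin.sum_univ_three] at this; linarith
    have hd1 : 0 ≤ A 1 1 := by
      have := hM 0 ![0,1,0]; simp [Fin.sum_univ_three] at this; linarith
    have hd2 : 0 ≤ A 2 2 := by
      have := hM 0 ![0,0,1]; simp [Fin.sum_univ_three] at this; linarith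
    have hA00 : A 0 0 = 0 := by linarith
    have hA11 : A 1 1 = 0 := by linarith
    have hA22 : A 2 2 = 0 := by linarith
    have hb : ∀ i, b i = 0 := by
      intro i
      by_contra hbne
      fin_cases i
      · have := hM (-1/(b 0)) ![1,0,0]
        simp [Fin.sum_univ_three] at this
        have hbne' : b 0 ≠ 0 := by simpa using hbne
        have h2 : 2 * (-1/b 0) * b 0 = -2 := by field_simp
        linarith
      · have := hM (-1/(b 1)) ![0,1,0]
        simp [Fin.sum_univ_three] at this
        have hbne' : b 1 ≠ 0 := by simpa using hbne
        have h2 : 2 * (-1/b 1) * b 1 = -2 := by field_simp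
        linarith
      · have := hM (-1/(b 2)) ![0,0,1]
        simp [Fin.sum_univ_three] at this
        have hbne' : b 2 ≠ 0 := by simpa using hbne
        have h2 : 2 * (-1/b 2) * b 2 = -2 := by field_simp
        linarith
    have hoff : ∀ i j, A i j = 0 := by
      have h01p := hM 0 ![1,1,0]
      have h01m := hM 0 ![1,-1,0]
      have h02p := hM 0 ![1,0,1]
      have h02m := hM 0 ![1,0,-1]
      have h12p := hM 0 ![0,1,1]
      have h12m := hM 0 ![0,1,-1]
      simp [Fin.sum_univ_three] at h01p h01m h02p h02m h12p h12m
      have e01 : A 0 1 = 0 := by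
        have := hsymm 0 1; nlinarith
      have e02 : A 0 2 = 0 := by
        have := hsymm 0 2; nlinarith
      have e12 : A 1 2 = 0 := by
        have := hsymm 1 2; nlinarith
      intro i j
      fin_cases i <;> fin_cases j <;>
        simp_all [hsymm 1 0, hsymm 2 0, hsymm 2 1]
    refine ⟨Fin 1, inferInstance, fun _ => 0, fun _ => ![1,0,0], fun _ => le_refl 0,
      by intro k; norm_num; rfl, by simp, by intro i; simp [hb i], ?_⟩
    intro i j
    simp [hoff i j]
  · have hcpos : 0 < c := lt_of_le_of_ne hc (Ne.symm hc0)
    obtain ⟨d, hddef⟩ : ∃ d : Fin 3 → ℝ, d = fun i => b i / c := ⟨_, rfl⟩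
    have hdc : ∀ i, b i = c * d i := by
      intro i; rw [hddef]; field_simp
    -- Schur-type inequality
    have hSchur : ∀ v : Fin 3 → ℝ,
        0 ≤ c * (∑ i, ∑ j, A i j * v i * v j) - (b 0*v 0 + b 1*v 1 + b 2*v 2)^2 := by
      intro v
      have hkey := hM (-(b 0*v 0 + b 1*v 1 + b 2*v 2)/c) v
      have e : c * (c*(-(b 0*v 0 + b 1*v 1 + b 2*v 2)/c)^2
          + 2*(-(b 0*v 0 + b 1*v 1 + b 2*v 2)/c)*(b 0*v 0 + b 1*v 1 + b 2*v 2)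
          + ∑ i, ∑ j, A i j * v i * v j)
          = c * (∑ i, ∑ j, A i j * v i * v j) - (b 0*v 0 + b 1*v 1 + b 2*v 2)^2 := by
        field_simp
        ring
      rw [← e]
      exact mul_nonneg hc hkey
    -- the matrix C
    obtain ⟨C, hCdef⟩ : ∃ C : Matrix (Fin 3) (Fin 3) ℝ,
        C = Matrix.of (fun i j => A i j / c - d i * d j) := ⟨_, rfl⟩
    have hCapp : ∀ i j, C i j = A i j / c - d i * d j := by
      intro i j; rw [hCdef]; rfl
    have hCpsd : C.PosSemidef := by
      refine Matrix.PosSemidef.of_dotProduct_mulVec_nonneg ?_ ?_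
      · ext i j
        simp only [Matrix.conjTranspose_apply, hCapp, star_trivial]
        rw [hsymm j i]; ring
      · intro v
        have hv : star v = v := by
          funext i; simp
        rw [hv]
        have expand : v ⬝ᵥ C.mulVec v = ∑ i, ∑ j, C i j * v i * v j := by
          simp only [dotProduct, Matrix.mulVec, dotProduct, Finset.mul_sum]
          refine Finset.sum_congr rfl fun i _ => Finset.sum_congr rfl fun j _ => by ring
        rw [expand]
        have e2 : ∑ i, ∑ j, C i j * v i * v j
            = (c * (∑ i, ∑ j, A i j * v i * v j)
               - (b 0*v 0 + b 1*v 1 + b 2*v 2)^2) / c^2 := by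
          simp only [hCapp, hddef, Fin.sum_univ_three]
          field_simp
          ring
        rw [e2]
        exact div_nonneg (hSchur v) (by positivity)
    obtain ⟨ρ, q, hρnn, hqnorm, hCdec⟩ := psd_decomp C hCpsd
    have hC' : ∀ i j, A i j / c - d i * d j
        = ρ 0*q 0 i*q 0 j + ρ 1*q 1 i*q 1 j + ρ 2*q 2 i*q 2 j := by
      intro i j
      have := hCdec i j
      rw [hCapp] at this
      rw [this, Fin.sum_univ_three]
    have hA' : ∀ i j, A i j = c * (d i * d j)
        + c * (ρ 0*q 0 i*q 0 j + ρ 1*q 1 i*q 1 j + ρ 2*q 2 i*q 2 j) := by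
      intro i j
      have h := hC' i j
      field_simp at h
      linarith [h]
    obtain ⟨r, hrdef⟩ : ∃ r : ℝ, r = 1 - (d 0^2 + d 1^2 + d 2^2) := ⟨_, rfl⟩
    have hρsum : ρ 0 + ρ 1 + ρ 2 = r := by
      have h0 := hC' 0 0
      have h1 := hC' 1 1
      have h2 := hC' 2 2
      have htr' : A 0 0 / c + A 1 1 / c + A 2 2 / c = 1 := by
        field_simp
        linarith [htr]
      rw [hrdef]
      linear_combination (-1)*h0 - h1 - h2 + htr' - (ρ 0)*(hqnorm 0) - (ρ 1)*(hqnorm 1)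
        - (ρ 2)*(hqnorm 2)
    have hrnn : 0 ≤ r := by
      rw [← hρsum]
      have g0 := hρnn 0; have g1 := hρnn 1; have g2 := hρnn 2
      linarith
    by_cases hrz : r = 0
    · have g0 := hρnn 0; have g1 := hρnn 1; have g2 := hρnn 2
      have hρ0 : ρ 0 = 0 := by linarith
      have hρ1 : ρ 1 = 0 := by linarith
      have hρ2 : ρ 2 = 0 := by linarith
      have hAcd : ∀ i j, A i j = c * d i * d j := by
        intro i j
        have h := hA' i j
        rw [hρ0, hρ1, hρ2] at h
        linarith [h]
      have hsph : d 0^2 + d 1^2 + d 2^2 = 1 := by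
        rw [hrdef] at hrz; linarith
      refine ⟨Fin 1, inferInstance, fun _ => c, fun _ => d, fun _ => hc, fun _ => hsph,
        by simp, ?_, ?_⟩
      · intro i
        rw [Fin.sum_univ_one]
        exact (hdc i).symm
      · intro i j
        rw [Fin.sum_univ_one]
        exact (hAcd i j).symm
    · have hrpos : 0 < r := lt_of_le_of_ne hrnn (Ne.symm hrz)
      obtain ⟨p, hpdef⟩ : ∃ p : Fin 3 → ℝ, p = fun k => ρ k / r := ⟨_, rfl⟩
      have hpr : ∀ k, ρ k = p k * r := by
        intro k; rw [hpdef]; field_simp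
      have hpsum : p 0 + p 1 + p 2 = 1 := by
        rw [hpdef]
        field_simp
        linarith [hρsum]
      have hpnn : ∀ k, 0 ≤ p k := by
        intro k; rw [hpdef]; exact div_nonneg (hρnn k) hrnn
      have hdsph : (d 0^2 + d 1^2 + d 2^2) + r = 1 := by rw [hrdef]; ring
      have hdyad := fun k => dyad d (q k) (c * p k) r (mul_nonneg hc (hpnn k)) hrpos
        (hqnorm k) hdsph
      choose w₁ w₂ u₁ u₂ hw₁ hw₂ hu₁ hu₂ hmass hmean hsec using hdyad
      refine ⟨Fin 3 × Bool, inferInstance,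
        (fun kp => cond kp.2 (w₁ kp.1) (w₂ kp.1)),
        (fun kp => cond kp.2 (u₁ kp.1) (u₂ kp.1)), ?_, ?_, ?_, ?_, ?_⟩
      · rintro ⟨k, s⟩
        cases s
        · exact hw₂ k
        · exact hw₁ k
      · rintro ⟨k, s⟩
        cases s
        · exact hu₂ k
        · exact hu₁ k
      · rw [Fintype.sum_prod_type]
        simp only [Fintype.sum_bool, Bool.cond_true, Bool.cond_false]
        rw [Fin.sum_univ_three]
        linear_combination hmass 0 + hmass 1 + hmass 2 + c * hpsum
      · intro i
        rw [Fintype.sum_prod_type]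
        simp only [Fintype.sum_bool, Bool.cond_true, Bool.cond_false]
        rw [Fin.sum_univ_three]
        linear_combination hmean 0 i + hmean 1 i + hmean 2 i + (c * d i) * hpsum - hdc i
      · intro i j
        rw [Fintype.sum_prod_type]
        simp only [Fintype.sum_bool, Bool.cond_true, Bool.cond_false]
        rw [Fin.sum_univ_three]
        linear_combination hsec 0 i j + hsec 1 i j + hsec 2 i j + (c*d i*d j) * hpsum
          - hA' i j - (c*q 0 i*q 0 j)*hpr 0 - (c*q 1 i*q 1 j)*hpr 1 - (c*q 2 i*q 2 j)*hpr 2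

lemma e000 : ![0, 0, 0] = (0 : Fin 3 → ℕ) := by
  funext i; fin_cases i <;> rfl

lemma e200 : ![2, 0, 0] = eIdx 0 + eIdx 0 := by decide

lemma e020 : ![0, 2, 0] = eIdx 1 + eIdx 1 := by decide

lemma e002 : ![0, 0, 2] = eIdx 2 + eIdx 2 := by decide

/-- a tms `y` of degree 2 in 3 variables admits a representing measure
supported on the unit sphere `S²` if and only if the `4×4` moment matrix `M₁(y)` is
positive semidefinite and `y₀₀₀ = y₂₀₀ + y₀₂₀ + y₀₀₂`. -/
theorem degree_two_tms_sphere (y : (Fin 3 → ℕ) → ℝ) :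
    (∃ μ : Measure (Fin 3 → ℝ), IsFiniteMeasure μ ∧
        measureSupport μ ⊆ {x | x 0 ^ 2 + x 1 ^ 2 + x 2 ^ 2 = 1} ∧
        ∀ α : Fin 3 → ℕ, (∑ i, α i) ≤ 2 → y α = ∫ x, mono x α ∂μ)
    ↔ ((momentMatrix 3 1 y).PosSemidef ∧
        y ![0, 0, 0] = y ![2, 0, 0] + y ![0, 2, 0] + y ![0, 0, 2]) := by
  constructor
  · rintro ⟨μ, hfin, hsupp, hmom⟩
    have hnull : μ {x | x 0 ^ 2 + x 1 ^ 2 + x 2 ^ 2 = 1}ᶜ = 0 :=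
      measure_compl_null μ _ hsupp
    have hae : ∀ᵐ x ∂μ, x 0 ^ 2 + x 1 ^ 2 + x 2 ^ 2 = 1 := mem_ae_iff.mpr hnull
    have hint : ∀ γ : Fin 3 → ℕ, Integrable (fun x => mono x γ) μ := by
      intro γ
      refine Integrable.mono' (integrable_const 1)
        ((continuous_mono γ).aestronglyMeasurable) ?_
      filter_upwards [hae] with x hx
      have h0 : |x 0| ≤ 1 := by
        nlinarith [abs_nonneg (x 0), sq_abs (x 0), sq_nonneg (x 1), sq_nonneg (x 2)]
      have h1 : |x 1| ≤ 1 := by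
        nlinarith [abs_nonneg (x 1), sq_abs (x 1), sq_nonneg (x 0), sq_nonneg (x 2)]
      have h2 : |x 2| ≤ 1 := by
        nlinarith [abs_nonneg (x 2), sq_abs (x 2), sq_nonneg (x 0), sq_nonneg (x 1)]
      have hxi : ∀ i, |x i| ≤ 1 := by
        intro i
        fin_cases i
        · exact h0
        · exact h1
        · exact h2
      calc |mono x γ| = ∏ i, |x i| ^ γ i := by
            rw [mono, Finset.abs_prod]
            exact Finset.prod_congr rfl fun i _ => (abs_pow _ _)
      _ ≤ 1 := Finset.prod_le_one (fun i _ => by positivity)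
            (fun i _ => pow_le_one₀ (abs_nonneg _) (hxi i))
    have hdeg : ∀ (a b : MIdx 3 1), (∑ i, (a.toNat + b.toNat) i) ≤ 2 := by
      intro a b
      have : (∑ i, (a.toNat + b.toNat) i) = (∑ i, a.toNat i) + (∑ i, b.toNat i) := by
        simp only [Pi.add_apply]
        rw [Finset.sum_add_distrib]
      rw [this]
      exact add_le_add a.2 b.2
    constructor
    · refine Matrix.PosSemidef.of_dotProduct_mulVec_nonneg ?_ ?_
      · ext i j
        simp only [Matrix.conjTranspose_apply, momentMatrix, Matrix.of_apply, star_trivial]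
        exact congrArg y (add_comm _ _)
      · intro W
        rw [quad_expand]
        have key : ∀ a b : MIdx 3 1, W a * W b * y (a.toNat + b.toNat)
            = ∫ x, (W a * mono x a.toNat) * (W b * mono x b.toNat) ∂μ := by
          intro a b
          rw [hmom _ (hdeg a b)]
          have he : (fun x => (W a * mono x a.toNat) * (W b * mono x b.toNat))
              = fun x => (W a * W b) * mono x (a.toNat + b.toNat) := by
            funext x; rw [mono_add]; ring
          rw [he, integral_const_mul, mul_assoc]
        have hint2 : ∀ a b : MIdx 3 1,
            Integrable (fun x => (W a * mono x a.toNat) * (W b * mono x b.toNat)) μ := by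
          intro a b
          have he : (fun x => (W a * mono x a.toNat) * (W b * mono x b.toNat))
              = fun x => (W a * W b) * mono x (a.toNat + b.toNat) := by
            funext x; rw [mono_add]; ring
          rw [he]
          exact (hint _).const_mul _
        calc (0:ℝ) ≤ ∫ x, (∑ a : MIdx 3 1, W a * mono x a.toNat)^2 ∂μ :=
              integral_nonneg fun x => sq_nonneg _
        _ = ∫ x, ∑ a : MIdx 3 1, ∑ b : MIdx 3 1,
              (W a * mono x a.toNat) * (W b * mono x b.toNat) ∂μ := by
              have he : (fun x => (∑ a : MIdx 3 1, W a * mono x a.toNat)^2)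
                  = fun x => ∑ a : MIdx 3 1, ∑ b : MIdx 3 1,
                      (W a * mono x a.toNat) * (W b * mono x b.toNat) := by
                funext x; rw [sq, Finset.sum_mul_sum]
              rw [he]
        _ = ∑ a : MIdx 3 1, ∫ x, ∑ b : MIdx 3 1,
              (W a * mono x a.toNat) * (W b * mono x b.toNat) ∂μ := by
              rw [integral_finset_sum _ fun a _ => integrable_finset_sum _ fun b _ => hint2 a b]
        _ = ∑ a : MIdx 3 1, ∑ b : MIdx 3 1, ∫ x,
              (W a * mono x a.toNat) * (W b * mono x b.toNat) ∂μ := by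
              refine Finset.sum_congr rfl fun a _ => ?_
              rw [integral_finset_sum _ fun b _ => hint2 a b]
        _ = ∑ a : MIdx 3 1, ∑ b : MIdx 3 1, W a * W b * y (a.toNat + b.toNat) := by
              refine Finset.sum_congr rfl fun a _ => Finset.sum_congr rfl fun b _ => ?_
              rw [key]
    · have h000 : y ![0,0,0] = ∫ x, (1:ℝ) ∂μ := by
        rw [hmom ![0,0,0] (by simp [Fin.sum_univ_three])]
        refine integral_congr_ae (Filter.Eventually.of_forall fun x => ?_)
        simp [mono, Fin.prod_univ_three]
      have h200 : y ![2,0,0] = ∫ x, (x 0)^2 ∂μ := by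
        rw [hmom ![2,0,0] (by simp [Fin.sum_univ_three])]
        refine integral_congr_ae (Filter.Eventually.of_forall fun x => ?_)
        simp [mono, Fin.prod_univ_three]
      have h020 : y ![0,2,0] = ∫ x, (x 1)^2 ∂μ := by
        rw [hmom ![0,2,0] (by simp [Fin.sum_univ_three])]
        refine integral_congr_ae (Filter.Eventually.of_forall fun x => ?_)
        simp [mono, Fin.prod_univ_three]
      have h002 : y ![0,0,2] = ∫ x, (x 2)^2 ∂μ := by
        rw [hmom ![0,0,2] (by simp [Fin.sum_univ_three])]
        refine integral_congr_ae (Filter.Eventually.of_forall fun x => ?_)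
        simp [mono, Fin.prod_univ_three]
      have hi200 : Integrable (fun x : Fin 3 → ℝ => (x 0)^2) μ := by
        have he : (fun x : Fin 3 → ℝ => (x 0)^2) = fun x => mono x ![2,0,0] := by
          funext x; simp [mono, Fin.prod_univ_three]
        rw [he]; exact hint _
      have hi020 : Integrable (fun x : Fin 3 → ℝ => (x 1)^2) μ := by
        have he : (fun x : Fin 3 → ℝ => (x 1)^2) = fun x => mono x ![0,2,0] := by
          funext x; simp [mono, Fin.prod_univ_three]
        rw [he]; exact hint _
      have hi002 : Integrable (fun x : Fin 3 → ℝ => (x 2)^2) μ := by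
        have he : (fun x : Fin 3 → ℝ => (x 2)^2) = fun x => mono x ![0,0,2] := by
          funext x; simp [mono, Fin.prod_univ_three]
        rw [he]; exact hint _
      rw [h000, h200, h020, h002]
      have step1 : ∫ x, (1:ℝ) ∂μ = ∫ x, ((x 0)^2 + (x 1)^2 + (x 2)^2) ∂μ := by
        refine integral_congr_ae ?_
        filter_upwards [hae] with x hx
        linarith [hx]
      have hi12 : Integrable (fun x : Fin 3 → ℝ => (x 0)^2 + (x 1)^2) μ := hi200.add hi020
      rw [step1, integral_add hi12 hi002, integral_add hi200 hi020]
  · rintro ⟨hpsd, htr⟩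
    -- scalar form of positivity
    have hsc : ∀ (t : ℝ) (v : Fin 3 → ℝ),
        0 ≤ (y 0)*t^2 + 2*t*(y (eIdx 0)*v 0 + y (eIdx 1)*v 1 + y (eIdx 2)*v 2)
          + ∑ i, ∑ j, (Matrix.of fun i j => y (eIdx i + eIdx j)) i j * v i * v j := by
      intro t v
      obtain ⟨W, hWdef⟩ : ∃ W : MIdx 3 1 → ℝ,
          W = fun β => if β = z1 then t else if β = ε 0 then v 0
            else if β = ε 1 then v 1 else v 2 := ⟨_, rfl⟩
      have ne1 : ε 0 ≠ z1 := by decide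
      have ne2 : ε 1 ≠ z1 := by decide
      have ne3 : ε 2 ≠ z1 := by decide
      have ne4 : ε 1 ≠ ε 0 := by decide
      have ne5 : ε 2 ≠ ε 0 := by decide
      have ne6 : ε 2 ≠ ε 1 := by decide
      have e0 : W z1 = t := by simp [hWdef]
      have e1 : W (ε 0) = v 0 := by simp [hWdef, ne1]
      have e2 : W (ε 1) = v 1 := by simp [hWdef, ne2, ne4]
      have e3 : W (ε 2) = v 2 := by simp [hWdef, ne3, ne5, ne6]
      have hq := hpsd.dotProduct_mulVec_nonneg W
      rw [quad_expand] at hq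
      rw [sum_MIdx] at hq
      simp only [sum_MIdx] at hq
      rw [e0, e1, e2, e3] at hq
      rw [idx_zz, idx_ze 0, idx_ze 1, idx_ze 2, idx_ez 0, idx_ez 1, idx_ez 2] at hq
      rw [idx_ee 0 0, idx_ee 0 1, idx_ee 0 2, idx_ee 1 0, idx_ee 1 1, idx_ee 1 2,
        idx_ee 2 0, idx_ee 2 1, idx_ee 2 2] at hq
      calc (0:ℝ) ≤ _ := hq
      _ = _ := by
        simp only [Fin.sum_univ_three, Matrix.of_apply]
        ring
    have hsymm : ∀ i j, (Matrix.of fun i j => y (eIdx i + eIdx j)) i j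
        = (Matrix.of fun i j => y (eIdx i + eIdx j)) j i := by
      intro i j
      simp only [Matrix.of_apply]
      exact congrArg y (add_comm _ _)
    have htrA : (Matrix.of fun i j => y (eIdx i + eIdx j)) 0 0
        + (Matrix.of fun i j => y (eIdx i + eIdx j)) 1 1
        + (Matrix.of fun i j => y (eIdx i + eIdx j)) 2 2 = y 0 := by
      simp only [Matrix.of_apply]
      rw [← e200, ← e020, ← e002, ← htr, e000]
    obtain ⟨ι, hι, w, u, hw, hsph, hmass, hmean, hsec⟩ :=
      exists_atoms (y 0) (fun i => y (eIdx i)) (Matrix.of fun i j => y (eIdx i + eIdx j))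
        hsymm htrA hsc
    obtain ⟨μ, hfin, hsupp, hintg⟩ := moments_of_atoms w u hw
    refine ⟨μ, hfin, ?_, ?_⟩
    · refine hsupp.trans ?_
      rintro x ⟨k, rfl⟩
      exact hsph k
    · intro α hα
      rw [hintg _ (continuous_mono α)]
      rcases alpha_cases α hα with h | ⟨i, h⟩ | ⟨i, j, h⟩
      · subst h
        simp only [mono_zero, mul_one]
        exact hmass.symm
      · subst h
        simp only [mono_e]
        exact (hmean i).symm
      · subst h
        simp only [mono_add, mono_e]
        have : ∑ k, w k * (mono (u k) (eIdx i) * mono (u k) (eIdx j))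
            = ∑ k, w k * u k i * u k j := by
          refine Finset.sum_congr rfl fun k _ => ?_
          rw [mono_e, mono_e]; ring
        rw [show (∑ k, w k * (u k i * u k j)) = ∑ k, w k * u k i * u k j from
          Finset.sum_congr rfl fun k _ => by ring]
        exact (hsec i j).symm
end
end
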